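/- Let A be an n×n complex matrix and N an n×n Hermitian positive definite matrix. Then A A^# = A^# A if and only if A†_{N,N} (A†_{N,N})^# = (A†_{N,N})^# A†_{N,N}, where for any n×n matrix B, B^# = N^{-1} B* N. -/

import Mathlib

open Matrix Filter Topology
open scoped ComplexOrder

/-- The four equations characterizing the weighted Moore-Penrose inverse of `A`
with respect to the weights `(M, N)`. -/
def IsWMP {m n : ℕ} (M : Matrix (Fin m) (Fin m) ℂ) (N : Matrix (Fin n) (Fin n) ℂ)
    (A : Matrix (Fin m) (Fin n) ℂ) (X : Matrix (Fin n) (Fin m) ℂ) : Prop :=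
  A * X * A = A ∧ X * A * X = X ∧ (M * A * X)ᴴ = M * A * X ∧ (N * X * A)ᴴ = N * X * A

/-- Purely algebraic core: in a ring with an anti-automorphism-like involution `s`,
if `x` is the `s`-Moore-Penrose inverse of `a` and `a` is `s`-normal, then so is `x`. -/
private lemma ring_key {R : Type*} [Ring R] (s : R → R)
    (s_mul : ∀ B C : R, s (B * C) = s C * s B)
    (s_s : ∀ B : R, s (s B) = B)
    (s_sub : ∀ B C : R, s (B - C) = s B - s C)
    (hz : ∀ d : R, s d = d → d * d = 0 → d = 0)
    (a x : R)
    (h1 : a * x * a = a) (h2 : x * a * x = x)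
    (h3 : s (a * x) = a * x) (h4 : s (x * a) = x * a)
    (hc : a * s a = s a * a) :
    x * s x = s x * x := by
  have s0 : s 0 = 0 := by simpa using s_sub 0 0
  have sinj : ∀ B : R, s B = 0 → B = 0 := by
    intro B h
    rw [← s_s B, h, s0]
  -- E1 : s a * a * x = s a
  have E1 : s a * a * x = s a := by
    have e : s (s a * a * x - s a) = 0 := by
      rw [s_sub, mul_assoc, s_mul, s_s, h3, h1, sub_self]
    exact sub_eq_zero.mp (sinj _ e)
  -- E2 : x * a * s a = s a
  have E2 : x * a * s a = s a := by
    have e : s (x * a * s a - s a) = 0 := by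
      rw [s_sub, s_mul, s_s, h4, ← mul_assoc, h1, sub_self]
    exact sub_eq_zero.mp (sinj _ e)
  set d := a * x - x * a with hd_def
  have sd : s d = d := by rw [hd_def, s_sub, h3, h4]
  -- (s a * a) * d = 0
  have hd : s a * a * d = 0 := by
    have t1 : s a * a * (a * x) = s a * a := by
      calc s a * a * (a * x) = a * s a * (a * x) := by rw [← hc]
        _ = a * (s a * a * x) := by noncomm_ring
        _ = a * s a := by rw [E1]
        _ = s a * a := hc
    have t2 : s a * a * (x * a) = s a * a := by
      calc s a * a * (x * a) = s a * a * x * a := by rw [mul_assoc (s a * a)]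
        _ = s a * a := by rw [E1]
    rw [hd_def, mul_sub, t1, t2, sub_self]
  -- d * (a * s a) = 0
  have dh : d * (a * s a) = 0 := by
    have t1 : a * x * (a * s a) = a * s a := by
      calc a * x * (a * s a) = a * x * a * s a := by rw [mul_assoc (a * x)]
        _ = a * s a := by rw [h1]
    have t2 : x * a * (a * s a) = a * s a := by
      calc x * a * (a * s a) = x * a * (s a * a) := by rw [hc]
        _ = x * a * s a * a := by rw [mul_assoc (x * a)]
        _ = s a * a := by rw [E2]
        _ = a * s a := hc.symm
    rw [hd_def, sub_mul, t1, t2, sub_self]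
  -- a * d = 0
  have ad : a * d = 0 := by
    have e : s x * (s a * a * d) = 0 := by rw [hd, mul_zero]
    calc a * d = a * x * a * d := by rw [h1]
      _ = s (a * x) * a * d := by rw [h3]
      _ = s x * s a * a * d := by rw [s_mul]
      _ = s x * (s a * a * d) := by noncomm_ring
      _ = 0 := e
  -- d * a = 0
  have da : d * a = 0 := by
    have e : d * (a * s a) * s x = 0 := by rw [dh, zero_mul]
    calc d * a = d * (a * x * a) := by rw [h1]
      _ = d * (a * (x * a)) := by rw [mul_assoc a]
      _ = d * (a * s (x * a)) := by rw [h4]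
      _ = d * (a * (s a * s x)) := by rw [s_mul]
      _ = d * (a * s a) * s x := by noncomm_ring
      _ = 0 := e
  -- d * s a = 0
  have dsa : d * s a = 0 := by
    apply sinj
    rw [s_mul, s_s, sd, ad]
  -- d * d = 0
  have dd : d * d = 0 := by
    have dxa : d * (x * a) = 0 := by
      calc d * (x * a) = d * s (x * a) := by rw [h4]
        _ = d * (s a * s x) := by rw [s_mul]
        _ = d * s a * s x := by rw [mul_assoc]
        _ = 0 := by rw [dsa, zero_mul]
    calc d * d = d * (a * x) - d * (x * a) := by rw [hd_def, mul_sub]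
      _ = d * a * x - 0 := by rw [mul_assoc, dxa]
      _ = 0 := by rw [da, zero_mul, sub_zero]
  have p : a * x = x * a := sub_eq_zero.mp (hz d sd dd)
  -- s a * x = x * s a
  have sax : s a * x = x * s a := by
    have step1 : a * (s a * x) = s a := by
      calc a * (s a * x) = a * s a * x := by rw [mul_assoc]
        _ = s a * a * x := by rw [hc]
        _ = s a := E1
    calc s a * x = x * a * s a * x := by rw [E2]
      _ = x * (a * (s a * x)) := by noncomm_ring
      _ = x * s a := by rw [step1]
  -- a * s x = s x * a
  have sxa : a * s x = s x * a := by
    have e := congrArg s sax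
    rw [s_mul, s_mul, s_s] at e
    exact e.symm
  -- s x = a * x * s x  and  s x = s x * (x * a)
  have sx1 : s x = a * x * s x := by
    conv_lhs => rw [← h2]
    rw [mul_assoc, s_mul, h3]
  have sx2 : s x = s x * (x * a) := by
    conv_lhs => rw [← h2]
    rw [s_mul, h4]
  have e1 : x * s x = x * s x * x * a := by
    conv_lhs => rw [sx2]
    noncomm_ring
  have e2 : s x * x = x * s x * x * a := by
    calc s x * x = a * x * s x * x := by rw [← sx1]
      _ = x * a * s x * x := by rw [p]
      _ = x * (a * s x) * x := by rw [mul_assoc x a]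
      _ = x * (s x * a) * x := by rw [sxa]
      _ = x * s x * (a * x) := by noncomm_ring
      _ = x * s x * (x * a) := by rw [p]
      _ = x * s x * x * a := by rw [← mul_assoc]
  exact e1.trans e2.symm

private lemma mkey {n : ℕ} (A N : Matrix (Fin n) (Fin n) ℂ) (hN : N.PosDef)
    (X : Matrix (Fin n) (Fin n) ℂ) (hX : IsWMP N N A X)
    (h : A * (N⁻¹ * Aᴴ * N) = (N⁻¹ * Aᴴ * N) * A) :
    X * (N⁻¹ * Xᴴ * N) = (N⁻¹ * Xᴴ * N) * X := by
  obtain ⟨h1, h2, h3, h4⟩ := hX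
  have hdet : IsUnit N.det := (Matrix.isUnit_iff_isUnit_det N).mp hN.isUnit
  have hNi : N⁻¹ * N = 1 := nonsing_inv_mul N hdet
  have hNi' : N * N⁻¹ = 1 := mul_nonsing_inv N hdet
  have hNH : Nᴴ = N := hN.isHermitian
  have hNiH : N⁻¹ᴴ = N⁻¹ := by rw [conjTranspose_nonsing_inv, hNH]
  set s : Matrix (Fin n) (Fin n) ℂ → Matrix (Fin n) (Fin n) ℂ :=
    fun B => N⁻¹ * Bᴴ * N with hs
  have s_mul : ∀ B C : Matrix (Fin n) (Fin n) ℂ, s (B * C) = s C * s B := by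
    intro B C
    simp only [hs, conjTranspose_mul, Matrix.mul_assoc]
    rw [← Matrix.mul_assoc N N⁻¹, hNi', Matrix.one_mul]
  have s_s : ∀ B : Matrix (Fin n) (Fin n) ℂ, s (s B) = B := by
    intro B
    simp only [hs, conjTranspose_mul, conjTranspose_conjTranspose, hNH, hNiH,
      Matrix.mul_assoc]
    rw [hNi, Matrix.mul_one, ← Matrix.mul_assoc, hNi, Matrix.one_mul]
  have s_sub : ∀ B C : Matrix (Fin n) (Fin n) ℂ, s (B - C) = s B - s C := by
    intro B C
    simp only [hs, conjTranspose_sub, Matrix.sub_mul, Matrix.mul_sub]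
  have hz : ∀ d : Matrix (Fin n) (Fin n) ℂ, s d = d → d * d = 0 → d = 0 := by
    intro d hsd hdd
    have hsd' : N⁻¹ * dᴴ * N = d := hsd
    have hNd : dᴴ * N = N * d := by
      calc dᴴ * N = N * N⁻¹ * dᴴ * N := by rw [hNi', Matrix.one_mul]
        _ = N * (N⁻¹ * dᴴ * N) := by noncomm_ring
        _ = N * d := by rw [hsd']
    have hq : dᴴ * N * d = 0 := by rw [hNd, Matrix.mul_assoc, hdd, Matrix.mul_zero]
    obtain ⟨B, hB⟩ : ∃ B : Matrix (Fin n) (Fin n) ℂ, N = Bᴴ * B := by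
      open scoped MatrixOrder in
      exact CStarAlgebra.nonneg_iff_eq_star_mul_self.mp hN.posSemidef.nonneg
    have hBd0 : (B * d)ᴴ * (B * d) = 0 := by
      calc (B * d)ᴴ * (B * d) = dᴴ * Bᴴ * (B * d) := by rw [conjTranspose_mul]
        _ = dᴴ * (Bᴴ * B) * d := by noncomm_ring
        _ = dᴴ * N * d := by rw [← hB]
        _ = 0 := hq
    have hBd : B * d = 0 := Matrix.conjTranspose_mul_self_eq_zero.mp hBd0
    have hNd0 : N * d = 0 := by rw [hB, Matrix.mul_assoc, hBd, Matrix.mul_zero]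
    calc d = N⁻¹ * N * d := by rw [hNi, Matrix.one_mul]
      _ = N⁻¹ * (N * d) := by rw [Matrix.mul_assoc]
      _ = 0 := by rw [hNd0, Matrix.mul_zero]
  have p3 : s (A * X) = A * X := by
    show N⁻¹ * (A * X)ᴴ * N = A * X
    have h3' : Xᴴ * (Aᴴ * N) = N * (A * X) := by
      have e := h3
      simp only [conjTranspose_mul, hNH, Matrix.mul_assoc] at e
      exact e
    rw [conjTranspose_mul]
    simp only [Matrix.mul_assoc]
    rw [h3', ← Matrix.mul_assoc, hNi, Matrix.one_mul]
  have p4 : s (X * A) = X * A := by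
    show N⁻¹ * (X * A)ᴴ * N = X * A
    have h4' : Aᴴ * (Xᴴ * N) = N * (X * A) := by
      have e := h4
      simp only [conjTranspose_mul, hNH, Matrix.mul_assoc] at e
      exact e
    rw [conjTranspose_mul]
    simp only [Matrix.mul_assoc]
    rw [h4', ← Matrix.mul_assoc, hNi, Matrix.one_mul]
  exact ring_key s s_mul s_s s_sub hz A X h1 h2 p3 p4 h

/-- A A^# = A^# A iff A†_{N,N} (A†_{N,N})^# = (A†_{N,N})^# A†_{N,N},
where B^# = N⁻¹ B* N. -/
theorem stmt_7 {n : ℕ} (A N : Matrix (Fin n) (Fin n) ℂ) (hN : N.PosDef)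
    (X : Matrix (Fin n) (Fin n) ℂ) (hX : IsWMP N N A X) :
    A * (N⁻¹ * Aᴴ * N) = (N⁻¹ * Aᴴ * N) * A ↔
      X * (N⁻¹ * Xᴴ * N) = (N⁻¹ * Xᴴ * N) * X := by
  constructor
  · intro h
    exact mkey A N hN X hX h
  · intro h
    exact mkey X N hN A ⟨hX.2.1, hX.1, hX.2.2.2, hX.2.2.1⟩ h
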